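/- Loop complementation on any subset preserves the collection of minimum-cardinality feasible sets: for any set system D = (E, F) and A ⊆ E, F_min(D) = F_min(D^{×|A}). -/
import Mathlib


open Finset Polynomial

variable {α : Type*} [DecidableEq α]

/-- The twist of a collection of feasible sets with respect to `A`. -/
noncomputable def SS.twist (A : Finset α) (F : Finset (Finset α)) : Finset (Finset α) :=
  F.image (fun X => symmDiff A X)

/-- Loop complementation at a single element `e`. -/
noncomputable def SS.lc (e : α) (F : Finset (Finset α)) : Finset (Finset α) :=
  symmDiff F ((F.filter (fun X => e ∉ X)).image (insert e))

/-- The two generating operations: twist `*` and loop complementation `×`. -/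
inductive SS.Op | star | cross

/-- Apply a single operation at a single element. -/
noncomputable def SS.opElem : SS.Op → α → Finset (Finset α) → Finset (Finset α)
  | .star, e, F => SS.twist {e} F
  | .cross, e, F => SS.lc e F

/-- Apply a word in `{*, ×}` at a single element. -/
noncomputable def SS.wordElem (w : List SS.Op) (e : α) (F : Finset (Finset α)) : Finset (Finset α) :=
  w.foldl (fun F o => SS.opElem o e F) F

/-- Apply a word in `{*, ×}` elementwise on a subset `A`. -/
noncomputable def SS.wordOn (w : List SS.Op) (A : Finset α) (F : Finset (Finset α)) : Finset (Finset α) :=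
  A.toList.foldl (fun F e => SS.wordElem w e F) F

/-- Size of a largest feasible set. -/
noncomputable def SS.rmax (F : Finset (Finset α)) : ℕ := F.sup Finset.card

/-- Size of a smallest feasible set. -/
noncomputable def SS.rmin (F : Finset (Finset α)) : ℕ := sInf (Finset.card '' (F : Set (Finset α)))

/-- The width of a set system. -/
noncomputable def SS.width (F : Finset (Finset α)) : ℕ := SS.rmax F - SS.rmin F

/-- The minimum-cardinality feasible sets. -/
noncomputable def SS.Fmin (F : Finset (Finset α)) : Finset (Finset α) :=
  F.filter (fun X => X.card = SS.rmin F)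

/-- The maximum-cardinality feasible sets. -/
noncomputable def SS.Fmax (F : Finset (Finset α)) : Finset (Finset α) :=
  F.filter (fun X => X.card = SS.rmax F)

/-- The partial-`w` polynomial of a set system with ground set `E`. -/
noncomputable def SS.poly (w : List SS.Op) (E : Finset α) (F : Finset (Finset α)) :
    Polynomial ℤ :=
  ∑ A ∈ E.powerset, (Polynomial.X : Polynomial ℤ) ^ SS.width (SS.wordOn w A F)

/-- A proper set system satisfying the symmetric exchange axiom. -/
noncomputable def SS.IsDeltaMatroid (F : Finset (Finset α)) : Prop :=
  F.Nonempty ∧ ∀ X ∈ F, ∀ Y ∈ F, ∀ u ∈ symmDiff X Y,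
    ∃ v ∈ symmDiff X Y, symmDiff X {u, v} ∈ F

/-- Apply a sequence of single-element twists and loop complementations. -/
noncomputable def SS.seqApply : List (SS.Op × α) → Finset (Finset α) → Finset (Finset α)
  | [], F => F
  | (o, e) :: s, F => SS.seqApply s (SS.opElem o e F)

/-- A set system is vf-safe if every sequence of single-element twists and loop
complementations yields a delta-matroid. -/
noncomputable def SS.VfSafe (F : Finset (Finset α)) : Prop :=
  ∀ s : List (SS.Op × α), SS.IsDeltaMatroid (SS.seqApply s F)

/-- The direct sum of two set systems. -/
noncomputable def SS.dsum (F F' : Finset (Finset α)) : Finset (Finset α) :=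
  (F ×ˢ F').image (fun p => p.1 ∪ p.2)

open SS

lemma SS.rmin_le {F : Finset (Finset α)} {X : Finset α} (hX : X ∈ F) :
    SS.rmin F ≤ X.card :=
  Nat.sInf_le ⟨X, by simpa using hX, rfl⟩

lemma SS.card_ge_of_mem_lc {e : α} {F : Finset (Finset α)} {X : Finset α}
    (h : X ∈ SS.lc e F) : SS.rmin F ≤ X.card := by
  rw [SS.lc, Finset.mem_symmDiff] at h
  rcases h with ⟨h1, _⟩ | ⟨h1, _⟩
  · exact SS.rmin_le h1
  · simp only [Finset.mem_image, Finset.mem_filter] at h1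
    obtain ⟨Y, ⟨hY, _⟩, rfl⟩ := h1
    exact le_trans (SS.rmin_le hY) (Finset.card_le_card (Finset.subset_insert _ _))

lemma SS.mem_F_of_mem_lc_min {e : α} {F : Finset (Finset α)} {X : Finset α}
    (h : X ∈ SS.lc e F) (hc : X.card = SS.rmin F) : X ∈ F := by
  rw [SS.lc, Finset.mem_symmDiff] at h
  rcases h with ⟨h1, _⟩ | ⟨h1, _⟩
  · exact h1
  · exfalso
    simp only [Finset.mem_image, Finset.mem_filter] at h1
    obtain ⟨Y, ⟨hY, he⟩, rfl⟩ := h1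
    have := SS.rmin_le hY
    rw [Finset.card_insert_of_notMem he] at hc
    omega

lemma SS.mem_lc_of_min {e : α} {F : Finset (Finset α)} {X : Finset α}
    (hX : X ∈ F) (hc : X.card = SS.rmin F) : X ∈ SS.lc e F := by
  rw [SS.lc, Finset.mem_symmDiff]
  left
  refine ⟨hX, fun h => ?_⟩
  simp only [Finset.mem_image, Finset.mem_filter] at h
  obtain ⟨Y, ⟨hY, he⟩, hXY⟩ := h
  have := SS.rmin_le hY
  rw [← hXY, Finset.card_insert_of_notMem he] at hc
  omega

lemma SS.Fmin_lc (e : α) (F : Finset (Finset α)) :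
    SS.Fmin (SS.lc e F) = SS.Fmin F := by
  rcases F.eq_empty_or_nonempty with rfl | ⟨X0, hX0⟩
  · simp [SS.lc, SS.Fmin]
  · -- get a minimum element of F
    have hne : (Finset.card '' (F : Set (Finset α))).Nonempty := ⟨X0.card, X0, hX0, rfl⟩
    have hmem := Nat.sInf_mem hne
    obtain ⟨Xm, hXm, hXmc⟩ := hmem
    have hXmF : Xm ∈ F := hXm
    have hXmlc : Xm ∈ SS.lc e F := SS.mem_lc_of_min hXmF hXmc
    have hrmin : SS.rmin (SS.lc e F) = SS.rmin F := by
      apply le_antisymm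
      · calc SS.rmin (SS.lc e F) ≤ Xm.card := SS.rmin_le hXmlc
          _ = SS.rmin F := hXmc
      · have hne' : (Finset.card '' ((SS.lc e F : Finset (Finset α)) : Set (Finset α))).Nonempty :=
          ⟨Xm.card, Xm, hXmlc, rfl⟩
        obtain ⟨X1, hX1, hX1c⟩ := Nat.sInf_mem hne'
        calc SS.rmin F ≤ X1.card := SS.card_ge_of_mem_lc hX1
          _ = SS.rmin (SS.lc e F) := hX1c
    ext X
    simp only [SS.Fmin, Finset.mem_filter, hrmin]
    constructor
    · rintro ⟨h1, h2⟩
      exact ⟨SS.mem_F_of_mem_lc_min h1 h2, h2⟩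
    · rintro ⟨h1, h2⟩
      exact ⟨SS.mem_lc_of_min h1 h2, h2⟩

lemma SS.Fmin_foldl_lc (l : List α) (F : Finset (Finset α)) :
    SS.Fmin (l.foldl (fun F e => SS.wordElem [SS.Op.cross] e F) F) = SS.Fmin F := by
  induction l generalizing F with
  | nil => rfl
  | cons e l ih =>
    rw [List.foldl_cons, ih]
    have : SS.wordElem [SS.Op.cross] e F = SS.lc e F := rfl
    rw [this, SS.Fmin_lc]

theorem stmt4 (F : Finset (Finset α)) (A : Finset α) :
    SS.Fmin F = SS.Fmin (SS.wordOn [SS.Op.cross] A F) := by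
  rw [SS.wordOn, SS.Fmin_foldl_lc]
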